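/- (S_2^≠, S_2^≠, [0, 1/2), [1/2, ∞))↓ holds: from every configuration in which robot r satisfies condition S_2^≠ with observed distance less than 1/2 and robot s satisfies condition S_2^≠ with observed distance at least 1/2, every fair SSynch execution of Algorithm 1 solves rendezvous. -/

import Mathlib

/-- Points in the plane. -/
abbrev Pt := EuclideanSpace ℝ (Fin 2)

/-- Observed directions. -/
inductive Dir | left | right
deriving DecidableEq

/-- The six internal states of Algorithm 1. -/
inductive St | start | s1 | s2 (d : Dir) | s3 | finish
deriving DecidableEq

/-- A local coordinate frame: an orthogonal linear map of the plane. -/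
abbrev Frame := Pt ≃ₗᵢ[ℝ] Pt

/-- Observed direction of a local vector `v`: `right` if its first coordinate is
positive, or is zero with positive second coordinate; `left` otherwise. -/
noncomputable def obsDir (v : Pt) : Dir :=
  if 0 < v 0 ∨ (v 0 = 0 ∧ 0 < v 1) then Dir.right else Dir.left

/-- Local vector observed by a robot with unit distance `u` and frame `A`,
located at `p`, looking at the other robot at `q`. -/
noncomputable def obsVec (u : ℝ) (A : Frame) (p q : Pt) : Pt := u⁻¹ • (A (q - p))

/-- Observed distance. -/
noncomputable def obsDist (u : ℝ) (p q : Pt) : ℝ := ‖q - p‖ / u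

/-- Algorithm 1: given the current state, the observed distance `d` and the
observed direction `dir`, returns the new state and the coefficient `μ` such
that the (global) destination is `p + μ • (q - p)` (i.e. local destination `μ • v`). -/
noncomputable def algo1 (s : St) (d : ℝ) (dir : Dir) : St × ℝ :=
  if d = 0 then (s, 0)
  else match s with
  | .start => if d < 1 then (.s1, 1 - 1/d) else (.s2 dir, 1)
  | .s1 => if d ≤ 1 then (.finish, 0) else (.s2 dir, 1)
  | .s2 d' =>
      if dir = d' then (.finish, 1)
      else if d < 1/2 then (.finish, 0)
      else if d < 1 then (.s3, 1/2)
      else (.s2 d', 1/2)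
  | .s3 => if d < 1/4 then (.finish, 0) else (.finish, 1)
  | .finish => if d ≤ 1 then (.finish, 0) else (.finish, 1)

/-- A configuration: positions and internal states of the two robots
(robot `r` is `false`, robot `s` is `true`). -/
structure Config where
  pos : Bool → Pt
  st : Bool → St

/-- Result (new position, new state) of one activation of robot `i`. -/
noncomputable def stepRobot (u : Bool → ℝ) (A : Bool → Frame) (c : Config) (i : Bool) :
    Pt × St :=
  let p := c.pos i
  let q := c.pos (!i)
  let d := obsDist (u i) p q
  let dir := obsDir (obsVec (u i) (A i) p q)
  let r := algo1 (c.st i) d dir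
  (p + r.2 • (q - p), r.1)

/-- One synchronous round in which exactly the robots `i` with `act i = true`
are activated; both activated robots observe the same (pre-round) configuration,
and rigidly reach their computed destinations. -/
noncomputable def stepConfig (u : Bool → ℝ) (A : Bool → Frame) (act : Bool → Bool)
    (c : Config) : Config where
  pos i := if act i then (stepRobot u A c i).1 else c.pos i
  st i := if act i then (stepRobot u A c i).2 else c.st i

/-- The configuration after `n` rounds of the SSynch execution of Algorithm 1
under schedule `sched`, starting from `c0`. -/
noncomputable def run (u : Bool → ℝ) (A : Bool → Frame) (sched : ℕ → Bool → Bool)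
    (c0 : Config) : ℕ → Config
  | 0 => c0
  | n + 1 => stepConfig u A (sched n) (run u A sched c0 n)

/-- A legal fair SSynch schedule: at every round a nonempty set of robots is
activated, and each robot is activated infinitely often. -/
def FairSched (sched : ℕ → Bool → Bool) : Prop :=
  (∀ n, sched n false = true ∨ sched n true = true) ∧
  (∀ i n, ∃ m, n ≤ m ∧ sched m i = true)

/-- Rendezvous is solved: from some round on, the two robots occupy the same
point and never move again. -/
noncomputable def Solves (u : Bool → ℝ) (A : Bool → Frame) (sched : ℕ → Bool → Bool)
    (c0 : Config) : Prop :=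
  ∃ N : ℕ, ∀ n, N ≤ n → ∀ i, (run u A sched c0 n).pos i = (run u A sched c0 N).pos false

/-- Conditions on a robot: one of the six internal states, or `S₂⁼` / `S₂≠`. -/
inductive Cond | start | s1 | s2 (d : Dir) | s2eq | s2ne | s3 | finish

/-- A robot in state `s` whose currently observed direction is `dir`
satisfies the condition. -/
def Cond.sat : Cond → St → Dir → Prop
  | .start, s, _ => s = .start
  | .s1, s, _ => s = .s1
  | .s2 d', s, _ => s = .s2 d'
  | .s2eq, s, dir => s = .s2 dir
  | .s2ne, s, dir => ∃ d', s = St.s2 d' ∧ d' ≠ dir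
  | .s3, s, _ => s = .s3
  | .finish, s, _ => s = .finish

/-- `(S_a, S_b, I_a, I_b)↓` : for every choice of the units and frames, from
every configuration in which robot `r` satisfies condition `Ca` with observed
distance in `Ia` and robot `s` satisfies condition `Cb` with observed distance
in `Ib`, every fair SSynch execution of Algorithm 1 solves Rendezvous. -/
noncomputable def Down (Ca Cb : Cond) (Ia Ib : Set ℝ) : Prop :=
  ∀ (u : Bool → ℝ) (A : Bool → Frame), (∀ i, 0 < u i) →
    ∀ c0 : Config,
      Ca.sat (c0.st false)
        (obsDir (obsVec (u false) (A false) (c0.pos false) (c0.pos true))) →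
      obsDist (u false) (c0.pos false) (c0.pos true) ∈ Ia →
      Cb.sat (c0.st true)
        (obsDir (obsVec (u true) (A true) (c0.pos true) (c0.pos false))) →
      obsDist (u true) (c0.pos true) (c0.pos false) ∈ Ib →
      ∀ sched : ℕ → Bool → Bool, FairSched sched → Solves u A sched c0



/-- Auxiliary: `obsDir` is invariant under positive scaling. -/
lemma obsDir_smul {c : ℝ} (hc : 0 < c) (v : Pt) : obsDir (c • v) = obsDir v := by
  have key : ∀ x : ℝ, (0 < c * x ↔ 0 < x) := by
    intro x
    constructor
    · intro h; nlinarith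
    · intro h; exact mul_pos hc h
  have key2 : ∀ x : ℝ, (c * x = 0 ↔ x = 0) := by
    intro x; simp [hc.ne']
  have h0 : (c • v) 0 = c * v 0 := rfl
  have h1 : (c • v) 1 = c * v 1 := rfl
  unfold obsDir
  rw [h0, h1]
  simp only [key, key2]

lemma algo1_zero (s : St) (dir : Dir) : algo1 s 0 dir = (s, 0) := by simp [algo1]

lemma algo1_s2_ne_small {d' dir : Dir} {d : ℝ} (hne : dir ≠ d') (hd : d ≠ 0)
    (hlt : d < 1/2) : algo1 (St.s2 d') d dir = (St.finish, 0) := by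
  have h2 : ¬ (2:ℝ)⁻¹ ≤ d := by push_neg; linarith
  simp [algo1, hd, hne, hlt, h2]

lemma algo1_s2_ne_mid {d' dir : Dir} {d : ℝ} (hne : dir ≠ d') (h12 : 1/2 ≤ d)
    (h1 : d < 1) : algo1 (St.s2 d') d dir = (St.s3, 1/2) := by
  have hd : d ≠ 0 := by intro h; rw [h] at h12; norm_num at h12
  have h2 : (2:ℝ)⁻¹ ≤ d := by linarith
  have : ¬ d < 1/2 := not_lt.2 h12
  simp [algo1, hd, hne, this, h1, h2]

lemma algo1_s2_ne_big {d' dir : Dir} {d : ℝ} (hne : dir ≠ d') (h1 : 1 ≤ d) :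
    algo1 (St.s2 d') d dir = (St.s2 d', 1/2) := by
  have hd : d ≠ 0 := by intro h; rw [h] at h1; norm_num at h1
  have h2 : ¬ d < 1/2 := by push_neg; linarith
  have h3 : ¬ d < 1 := not_lt.2 h1
  have h4 : (2:ℝ)⁻¹ ≤ d := by linarith
  simp [algo1, hd, hne, h2, h3, h4]

lemma algo1_s3_big {dir : Dir} {d : ℝ} (h : 1/4 ≤ d) :
    algo1 St.s3 d dir = (St.finish, 1) := by
  have hd : d ≠ 0 := by intro hh; rw [hh] at h; norm_num at h
  have : ¬ d < 1/4 := not_lt.2 h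
  have h4 : (4:ℝ)⁻¹ ≤ d := by linarith
  simp [algo1, hd, this, h4]

lemma algo1_finish_small {dir : Dir} {d : ℝ} (h : d ≤ 1) :
    algo1 St.finish d dir = (St.finish, 0) := by
  by_cases hd : d = 0
  · simp [algo1, hd]
  · simp [algo1, hd, h]

/-- Case predicate for robot `s` along the execution. -/
def SC (ds : Dir) (us L : ℝ) (st : St) (t : ℝ) : Prop :=
  (st = St.s2 ds ∧ 1/2 ≤ t * L / us) ∨
  (st = St.s3 ∧ 1/4 ≤ t * L / us ∧ t * L / us < 1/2) ∨
  (st = St.finish ∧ t = 0)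

set_option maxHeartbeats 1000000 in
/-- Lemma 7: `(S_2^≠, S_2^≠, [0, 1/2), [1/2, ∞))↓`. -/
theorem lemma_l8 :
    Down Cond.s2ne Cond.s2ne (Set.Ico (0 : ℝ) (1/2)) (Set.Ici (1/2 : ℝ)) := by
  intro u A hu c0 hr hrI hs hsI sched hfair
  obtain ⟨dr, hdr, hdrne⟩ := hr
  obtain ⟨ds, hds, hdsne⟩ := hs
  set p := c0.pos false with hp
  set q := c0.pos true with hqdef
  set w : Pt := q - p with hwdef
  have hq : p + w = q := by rw [hwdef]; abel
  set L := ‖w‖ with hLdef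
  have hur : 0 < u false := hu false
  have hus : 0 < u true := hu true
  -- initial distance facts
  have hrlt : L / u false < 1/2 := by
    have := hrI.2
    rwa [obsDist] at this
  have hsge : 1/2 ≤ L / u true := by
    have := hsI
    rw [Set.mem_Ici, obsDist] at this
    rwa [show p - q = -w by rw [hwdef]; abel, norm_neg] at this
  have hLpos : 0 < L := by
    have h1 : 1/2 * u true ≤ L := by
      rw [← le_div_iff₀ hus] at *
      linarith
    linarith
  -- geometric lemmas
  have posR : ∀ t : ℝ, (p + t • w) - p = t • (q - p) := by
    intro t; rw [← hq]; module
  have posS : ∀ t : ℝ, p - (p + t • w) = t • (p - q) := by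
    intro t; rw [← hq]; module
  have obsVecR : ∀ t : ℝ,
      obsVec (u false) (A false) p (p + t • w) = t • obsVec (u false) (A false) p q := by
    intro t
    unfold obsVec
    rw [posR t, map_smul, smul_comm]
  have obsVecS : ∀ t : ℝ,
      obsVec (u true) (A true) (p + t • w) p = t • obsVec (u true) (A true) q p := by
    intro t
    unfold obsVec
    rw [posS t, map_smul, smul_comm]
  have obsDistR : ∀ t : ℝ, 0 ≤ t →
      obsDist (u false) p (p + t • w) = t * L / u false := by
    intro t ht
    unfold obsDist
    rw [posR t, norm_smul, Real.norm_eq_abs, abs_of_nonneg ht, ← hwdef]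
  have obsDistS : ∀ t : ℝ, 0 ≤ t →
      obsDist (u true) (p + t • w) p = t * L / u true := by
    intro t ht
    unfold obsDist
    rw [posS t, norm_smul, Real.norm_eq_abs, abs_of_nonneg ht, norm_sub_rev, ← hwdef]
  set dR := obsDir (obsVec (u false) (A false) p q) with hdR
  set dS := obsDir (obsVec (u true) (A true) q p) with hdS
  have dirR : ∀ t : ℝ, 0 < t →
      obsDir (obsVec (u false) (A false) p (p + t • w)) = dR := by
    intro t ht; rw [obsVecR t]; exact obsDir_smul ht _
  have dirS : ∀ t : ℝ, 0 < t →
      obsDir (obsVec (u true) (A true) (p + t • w) p) = dS := by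
    intro t ht; rw [obsVecS t]; exact obsDir_smul ht _
  -- activation counter
  set cnt : ℕ → ℕ := fun n => ((Finset.range n).filter (fun m => sched m true = true)).card
    with hcnt
  have cnt_succ : ∀ n, cnt (n+1) = cnt n + (if sched n true = true then 1 else 0) := by
    intro n
    simp only [hcnt, Finset.range_add_one, Finset.filter_insert]
    split
    · rw [Finset.card_insert_of_notMem (by simp)]
    · simp
  have cnt_mono : Monotone cnt := by
    intro a b hab
    exact Finset.card_le_card (Finset.filter_subset_filter _ (Finset.range_subset_range.mpr hab))
  -- the invariant
  have P : ∀ n, ∃ t : ℝ, 0 ≤ t ∧ t ≤ (1/2 : ℝ) ^ (cnt n) ∧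
      (run u A sched c0 n).pos false = p ∧
      (run u A sched c0 n).pos true = p + t • w ∧
      ((run u A sched c0 n).st false = St.s2 dr ∨ (run u A sched c0 n).st false = St.finish) ∧
      SC ds (u true) L ((run u A sched c0 n).st true) t := by
    intro n
    induction n with
    | zero =>
      refine ⟨1, by norm_num, by simp [hcnt], rfl, by rw [one_smul, hq]; rfl, Or.inl hdr, ?_⟩
      exact Or.inl ⟨hds, by rw [one_mul]; exact hsge⟩
    | succ n ih =>
      obtain ⟨t, ht0, htb, hpf, hpt, hstf, hcase⟩ := ih
      set c := run u A sched c0 n with hc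
      have hrun : run u A sched c0 (n+1) = stepConfig u A (sched n) c := rfl
      have ht1 : t ≤ 1 := le_trans htb (pow_le_one₀ (by norm_num) (by norm_num))
      -- robot r (false)
      have hsrR : stepRobot u A c false =
          (c.pos false + (algo1 (c.st false)
            (obsDist (u false) (c.pos false) (c.pos true))
            (obsDir (obsVec (u false) (A false) (c.pos false) (c.pos true)))).2 •
              (c.pos true - c.pos false),
           (algo1 (c.st false)
            (obsDist (u false) (c.pos false) (c.pos true))
            (obsDir (obsVec (u false) (A false) (c.pos false) (c.pos true)))).1) := rfl
      have hdr_dist : obsDist (u false) (c.pos false) (c.pos true) = t * L / u false := by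
        rw [hpf, hpt]; exact obsDistR t ht0
      have hR : (stepConfig u A (sched n) c).pos false = p ∧
          ((stepConfig u A (sched n) c).st false = St.s2 dr ∨
           (stepConfig u A (sched n) c).st false = St.finish) := by
        cases hact : sched n false with
        | false => constructor <;> simp [stepConfig, hact, hpf, hstf]
        | true =>
          have hpos1 : (stepConfig u A (sched n) c).pos false = (stepRobot u A c false).1 := by
            simp [stepConfig, hact]
          have hst1 : (stepConfig u A (sched n) c).st false = (stepRobot u A c false).2 := by
            simp [stepConfig, hact]
          rcases eq_or_lt_of_le ht0 with h0 | h0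
          · -- t = 0 : distance 0, no move, keep state
            have hd0 : obsDist (u false) (c.pos false) (c.pos true) = 0 := by
              rw [hdr_dist, ← h0]; ring
            rw [hpos1, hst1, hsrR, hd0, algo1_zero]
            constructor
            · simp [hpf]
            · exact hstf
          · -- t > 0
            have hdd : obsDir (obsVec (u false) (A false) (c.pos false) (c.pos true)) = dR := by
              rw [hpf, hpt]; exact dirR t h0
            have hdne : t * L / u false ≠ 0 := by positivity
            have hdlt : t * L / u false < 1/2 := by
              have h1 : t * L / u false ≤ 1 * L / u false := by gcongr
              rw [one_mul] at h1
              linarith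
            rcases hstf with h | h
            · rw [hpos1, hst1, hsrR, hdd, hdr_dist, h,
                algo1_s2_ne_small (fun he => hdrne he.symm) hdne hdlt]
              constructor
              · simp [hpf]
              · exact Or.inr rfl
            · rw [hpos1, hst1, hsrR, hdd, hdr_dist, h,
                algo1_finish_small (by linarith : t * L / u false ≤ 1)]
              constructor
              · simp [hpf]
              · exact Or.inr rfl
      -- robot s (true)
      have hsrS : stepRobot u A c true =
          (c.pos true + (algo1 (c.st true)
            (obsDist (u true) (c.pos true) (c.pos false))
            (obsDir (obsVec (u true) (A true) (c.pos true) (c.pos false)))).2 •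
              (c.pos false - c.pos true),
           (algo1 (c.st true)
            (obsDist (u true) (c.pos true) (c.pos false))
            (obsDir (obsVec (u true) (A true) (c.pos true) (c.pos false)))).1) := rfl
      have hds_dist : obsDist (u true) (c.pos true) (c.pos false) = t * L / u true := by
        rw [hpf, hpt]; exact obsDistS t ht0
      have hS : ∃ t' : ℝ, 0 ≤ t' ∧
          (sched n true = true → 2 * t' ≤ t) ∧
          (sched n true = false → t' = t) ∧
          (stepConfig u A (sched n) c).pos true = p + t' • w ∧
          SC ds (u true) L ((stepConfig u A (sched n) c).st true) t' := by
        cases hact : sched n true with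
        | false =>
          refine ⟨t, ht0, by simp, fun _ => rfl, ?_, ?_⟩
          · simp [stepConfig, hact, hpt]
          · have : (stepConfig u A (sched n) c).st true = c.st true := by
              simp [stepConfig, hact]
            rw [this]; exact hcase
        | true =>
          have hpos1 : (stepConfig u A (sched n) c).pos true = (stepRobot u A c true).1 := by
            simp [stepConfig, hact]
          have hst1 : (stepConfig u A (sched n) c).st true = (stepRobot u A c true).2 := by
            simp [stepConfig, hact]
          rcases hcase with ⟨hstA, hdA⟩ | ⟨hstB, hdB1, hdB2⟩ | ⟨hstC, htC⟩
          · -- case A : state s2 ds, d ≥ 1/2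
            have htpos : 0 < t := by
              rcases eq_or_lt_of_le ht0 with h0 | h0
              · exfalso; rw [← h0] at hdA; norm_num at hdA
              · exact h0
            have hdd : obsDir (obsVec (u true) (A true) (c.pos true) (c.pos false)) = dS := by
              rw [hpf, hpt]; exact dirS t htpos
            have hdir_ne : dS ≠ ds := fun he => hdsne he.symm
            by_cases h1 : t * L / u true < 1
            · -- d ∈ [1/2, 1) : go to s3, move half
              refine ⟨t/2, by linarith, fun _ => by linarith, by simp [hact], ?_, ?_⟩
              · rw [hpos1, hsrS, hdd, hds_dist, hstA, algo1_s2_ne_mid hdir_ne hdA h1]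
                rw [hpt, hpf]
                module
              · rw [hst1, hsrS, hdd, hds_dist, hstA, algo1_s2_ne_mid hdir_ne hdA h1]
                refine Or.inr (Or.inl ⟨rfl, ?_, ?_⟩)
                · have : t/2 * L / u true = (t * L / u true)/2 := by ring
                  rw [this]; linarith
                · have : t/2 * L / u true = (t * L / u true)/2 := by ring
                  rw [this]; linarith
            · -- d ≥ 1 : stay s2, move half
              have h1' : 1 ≤ t * L / u true := not_lt.mp h1
              refine ⟨t/2, by linarith, fun _ => by linarith, by simp [hact], ?_, ?_⟩
              · rw [hpos1, hsrS, hdd, hds_dist, hstA, algo1_s2_ne_big hdir_ne h1']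
                rw [hpt, hpf]
                module
              · rw [hst1, hsrS, hdd, hds_dist, hstA, algo1_s2_ne_big hdir_ne h1']
                refine Or.inl ⟨rfl, ?_⟩
                have : t/2 * L / u true = (t * L / u true)/2 := by ring
                rw [this]; linarith
          · -- case B : state s3, d ∈ [1/4, 1/2) : jump onto r
            refine ⟨0, le_refl 0, fun _ => by linarith, by simp [hact], ?_, ?_⟩
            · rw [hpos1, hsrS, hds_dist, hstB, algo1_s3_big hdB1]
              rw [hpt, hpf]
              module
            · rw [hst1, hsrS, hds_dist, hstB, algo1_s3_big hdB1]
              exact Or.inr (Or.inr ⟨rfl, rfl⟩)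
          · -- case C : finished, t = 0
            have hd0 : obsDist (u true) (c.pos true) (c.pos false) = 0 := by
              rw [hds_dist, htC]; ring
            refine ⟨0, le_refl 0, fun _ => by linarith, fun _ => htC.symm, ?_, ?_⟩
            · rw [hpos1, hsrS, hd0, algo1_zero]
              rw [hpt, htC]
              module
            · rw [hst1, hsrS, hd0, algo1_zero, hstC]
              exact Or.inr (Or.inr ⟨rfl, rfl⟩)
      obtain ⟨t', ht0', hhalf, hsame, hpt', hsc'⟩ := hS
      refine ⟨t', ht0', ?_, ?_, ?_, ?_, ?_⟩
      · -- the bound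
        cases hact : sched n true with
        | false =>
          rw [cnt_succ, hact]
          simp only [if_neg (by simp : ¬ (false = true)), Nat.add_zero]
          rw [hsame hact]; exact htb
        | true =>
          rw [cnt_succ, hact, if_pos rfl, pow_succ]
          have := hhalf hact
          nlinarith [pow_nonneg (by norm_num : (0:ℝ) ≤ 1/2) (cnt n)]
      · rw [hrun]; exact hR.1
      · rw [hrun]; exact hpt'
      · rw [hrun]; exact hR.2
      · rw [hrun]; exact hsc'
  -- termination
  obtain ⟨K, hK⟩ : ∃ K : ℕ, (1/2 : ℝ) ^ K < u true / (4 * L) := by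
    refine exists_pow_lt_of_lt_one (by positivity) (by norm_num)
  have hub : ∀ k : ℕ, ∃ n, k ≤ cnt n := by
    intro k
    induction k with
    | zero => exact ⟨0, Nat.zero_le _⟩
    | succ k ih =>
      obtain ⟨n, hn⟩ := ih
      obtain ⟨m, hm, hsm⟩ := hfair.2 true n
      refine ⟨m + 1, ?_⟩
      rw [cnt_succ, hsm, if_pos rfl]
      have := cnt_mono hm
      omega
  obtain ⟨N, hN⟩ := hub K
  refine ⟨N, ?_⟩
  have key : ∀ m, N ≤ m → (run u A sched c0 m).pos false = p ∧
      (run u A sched c0 m).pos true = p := by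
    intro m hm
    obtain ⟨t, ht0, htb, hpf, hpt, _, hcase⟩ := P m
    have hKm : K ≤ cnt m := le_trans hN (cnt_mono hm)
    have htsmall : t < u true / (4 * L) := by
      calc t ≤ (1/2 : ℝ) ^ (cnt m) := htb
        _ ≤ (1/2 : ℝ) ^ K := pow_le_pow_of_le_one (by norm_num) (by norm_num) hKm
        _ < u true / (4 * L) := hK
    have ht00 : t = 0 := by
      rcases hcase with ⟨_, h⟩ | ⟨_, h, _⟩ | ⟨_, h⟩
      · exfalso
        have : t * L < u true / 4 := by
          have h1 : t * L < (u true / (4 * L)) * L := by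
            apply mul_lt_mul_of_pos_right htsmall hLpos
          have h2 : (u true / (4 * L)) * L = u true / 4 := by
            field_simp
          linarith [h1, h2.symm.le]
        rw [le_div_iff₀ hus] at h
        nlinarith
      · exfalso
        have : t * L < u true / 4 := by
          have h1 : t * L < (u true / (4 * L)) * L := by
            apply mul_lt_mul_of_pos_right htsmall hLpos
          have h2 : (u true / (4 * L)) * L = u true / 4 := by
            field_simp
          linarith [h1, h2.symm.le]
        rw [le_div_iff₀ hus] at h
        nlinarith
      · exact h
    refine ⟨hpf, ?_⟩
    rw [hpt, ht00, zero_smul, add_zero]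
  intro n hn i
  have h1 := key n hn
  have h2 := key N le_rfl
  cases i
  · rw [h1.1, h2.1]
  · rw [h1.2, h2.1]
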